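/- arXiv:math/0604156 — 2 statements merged into one kernel-verified Lean document; each statement's English description precedes it below -/
import Mathlib

section
/- For every h ∈ ω^ω there exists h* ∈ ω^ω such that 𝔩'_h ≤ 𝔩_{h*}, where 𝔩'_h is defined like 𝔩_h but with covering slaloms required to lie in S^+ = {φ ∈ S : lim_{n→∞} |φ(n)|/2^n = 0}. Consequently sup{𝔩'_h : h ∈ ω^ω} = sup{𝔩_h : h ∈ ω^ω}. -/
open Filter

abbrev Slalom := ℕ → Finset ℕ

def SqS (φ ψ : Slalom) : Prop := ∀ᶠ n in atTop, φ n ⊆ ψ n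

def fSq (f : ℕ → ℕ) (φ : Slalom) : Prop := ∀ᶠ n in atTop, f n ∈ φ n

def SPlus (φ : Slalom) : Prop :=
  (∀ n, (φ n).card ≤ 2 ^ n) ∧
  Tendsto (fun n => ((φ n).card : ℝ) / 2 ^ n) atTop (nhds 0)

def ThetaWitness (h : ℕ → ℕ) (Φ : Set Slalom) : Prop :=
  (∀ φ ∈ Φ, ∀ n, (φ n).card ≤ h n - 1) ∧
  (∀ φ ∈ Φ, ∀ ψ ∈ Φ, SqS φ ψ ∨ SqS ψ φ) ∧
  Φ.WellFoundedOn (fun a b => SqS a b ∧ ¬ SqS b a) ∧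
  (∀ f : ℕ → ℕ, (∀ n, f n < h n) → ∃ φ ∈ Φ, fSq f φ)

open Classical in
noncomputable def theta (h : ℕ → ℕ) : Cardinal :=
  if ∃ Φ, ThetaWitness h Φ then
    sInf {c | ∃ Φ, ThetaWitness h Φ ∧ Cardinal.mk Φ = c}
  else Order.succ Cardinal.continuum

noncomputable def thetaStar : Cardinal :=
  ⨅ h : {h : ℕ → ℕ // ∀ n, 2 ≤ h n}, theta h.1

noncomputable def lcal (h : ℕ → ℕ) : Cardinal :=
  sInf {c | ∃ Φ : Set Slalom, (∀ φ ∈ Φ, ∀ n, (φ n).card ≤ 2 ^ n) ∧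
    (∀ f : ℕ → ℕ, (∀ n, f n < h n) → ∃ φ ∈ Φ, fSq f φ) ∧ Cardinal.mk Φ = c}

noncomputable def lcal' (h : ℕ → ℕ) : Cardinal :=
  sInf {c | ∃ Φ : Set Slalom, (∀ φ ∈ Φ, SPlus φ) ∧
    (∀ f : ℕ → ℕ, (∀ n, f n < h n) → ∃ φ ∈ Φ, fSq f φ) ∧ Cardinal.mk Φ = c}

def H1 : ℕ → ℕ := fun n => 2 ^ n + 1

/-- The "compression" of a slalom: pairs of coordinates of `f ∈ ∏ h` are coded into a single
coordinate; here we decode. -/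
def tr (h : ℕ → ℕ) (φ : Slalom) : Slalom := fun n =>
  if n % 2 = 0 then (φ (n / 2)).image (fun x => x % h n)
  else (φ (n / 2)).image (fun x => x / h (n - 1))

lemma tr_card_le (h : ℕ → ℕ) (φ : Slalom) (n : ℕ) :
    (tr h φ n).card ≤ (φ (n / 2)).card := by
  unfold tr; split <;> exact Finset.card_image_le

/-- the coding function -/
def pairFn (h f : ℕ → ℕ) : ℕ → ℕ := fun m => f (2 * m) + h (2 * m) * f (2 * m + 1)

/-- The singleton family witnesses nonemptiness of the defining set of `lcal'`. -/
lemma lcal'_set_nonempty (h : ℕ → ℕ) :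
    {c | ∃ Φ : Set Slalom, (∀ φ ∈ Φ, SPlus φ) ∧
      (∀ f : ℕ → ℕ, (∀ n, f n < h n) → ∃ φ ∈ Φ, fSq f φ) ∧ Cardinal.mk Φ = c}.Nonempty := by
  refine ⟨_, Set.range (fun f : ℕ → ℕ => (fun n => ({f n} : Finset ℕ) : Slalom)), ?_, ?_, rfl⟩
  · rintro φ ⟨f, rfl⟩
    refine ⟨fun n => by simpa using Nat.one_le_two_pow, ?_⟩
    have t1 : Tendsto (fun k : ℕ => ((1 : ℝ) / 2) ^ k) atTop (nhds 0) :=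
      tendsto_pow_atTop_nhds_zero_of_lt_one (by norm_num) (by norm_num)
    convert t1 using 2 with n
    simp [div_pow]
  · intro f _
    exact ⟨_, ⟨f, rfl⟩, Filter.Eventually.of_forall (fun n => by simp)⟩

lemma lcal_set_nonempty (h : ℕ → ℕ) :
    {c | ∃ Φ : Set Slalom, (∀ φ ∈ Φ, ∀ n, (φ n).card ≤ 2 ^ n) ∧
      (∀ f : ℕ → ℕ, (∀ n, f n < h n) → ∃ φ ∈ Φ, fSq f φ) ∧ Cardinal.mk Φ = c}.Nonempty := by
  refine ⟨_, Set.range (fun f : ℕ → ℕ => (fun n => ({f n} : Finset ℕ) : Slalom)), ?_, ?_, rfl⟩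
  · rintro φ ⟨f, rfl⟩ n
    simpa using Nat.one_le_two_pow
  · intro f _
    exact ⟨_, ⟨f, rfl⟩, Filter.Eventually.of_forall (fun n => by simp)⟩

lemma lcal_le_lcal' (h : ℕ → ℕ) : lcal h ≤ lcal' h := by
  obtain ⟨Φ, hS, hcov, hmk⟩ := csInf_mem (lcal'_set_nonempty h)
  exact csInf_le' ⟨Φ, fun φ hφ => (hS φ hφ).1, hcov, hmk⟩

lemma main_step (h : ℕ → ℕ) : ∃ hs : ℕ → ℕ, lcal' h ≤ lcal hs := by
  by_cases hpos : ∀ n, 0 < h n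
  swap
  · push_neg at hpos
    obtain ⟨n, hn⟩ := hpos
    refine ⟨h, le_trans (csInf_le' ⟨∅, by simp, fun f hf => absurd (hf n) (by omega), by simp⟩)
      zero_le⟩
  set hs : ℕ → ℕ := fun m => h (2 * m) * h (2 * m + 1) with hhs
  refine ⟨hs, ?_⟩
  obtain ⟨Φ, hcard, hcov, hmk⟩ := csInf_mem (lcal_set_nonempty hs)
  have hΨ : lcal' h ≤ Cardinal.mk ((tr h) '' Φ) := by
    refine csInf_le' ⟨(tr h) '' Φ, ?_, ?_, rfl⟩
    · rintro ψ ⟨φ, hφ, rfl⟩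
      have hc : ∀ n, (tr h φ n).card ≤ 2 ^ (n / 2) :=
        fun n => le_trans (tr_card_le h φ n) (hcard φ hφ (n / 2))
      constructor
      · intro n
        exact le_trans (hc n) (Nat.pow_le_pow_right (by norm_num) (Nat.div_le_self n 2))
      · have key : ∀ n, ((tr h φ n).card : ℝ) / 2 ^ n ≤ ((1 : ℝ) / 2) ^ (n / 2) := by
          intro n
          have hnat : (tr h φ n).card * 2 ^ (n / 2) ≤ 1 * 2 ^ n := by
            calc (tr h φ n).card * 2 ^ (n / 2) ≤ 2 ^ (n / 2) * 2 ^ (n / 2) :=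
                  Nat.mul_le_mul_right _ (hc n)
              _ = 2 ^ (n / 2 + n / 2) := (pow_add 2 _ _).symm
              _ ≤ 1 * 2 ^ n := by
                  rw [one_mul]; exact Nat.pow_le_pow_right (by norm_num) (by omega)
          rw [div_pow, one_pow, div_le_div_iff₀ (by positivity) (by positivity)]
          exact_mod_cast hnat
        have t1 : Tendsto (fun k : ℕ => ((1 : ℝ) / 2) ^ k) atTop (nhds 0) :=
          tendsto_pow_atTop_nhds_zero_of_lt_one (by norm_num) (by norm_num)
        have t2 : Tendsto (fun n : ℕ => n / 2) atTop atTop := by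
          refine tendsto_atTop_atTop.mpr fun b => ⟨2 * b, fun n hn => by omega⟩
        exact squeeze_zero (fun n => by positivity) key (t1.comp t2)
    · intro f hf
      obtain ⟨φ, hφΦ, hgφ⟩ := hcov (pairFn h f) (by
        intro m
        have h1 := hf (2 * m)
        have h2 := hf (2 * m + 1)
        have h3 := hpos (2 * m)
        have : h (2 * m) * (f (2 * m + 1) + 1) ≤ h (2 * m) * h (2 * m + 1) :=
          Nat.mul_le_mul_left _ (by omega)
        unfold pairFn; simp only [hhs]; nlinarith)
      obtain ⟨N, hN⟩ := eventually_atTop.mp hgφ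
      refine ⟨tr h φ, ⟨φ, hφΦ, rfl⟩, eventually_atTop.mpr ⟨2 * N + 1, fun n hn => ?_⟩⟩
      by_cases hpar : n % 2 = 0
      · have e1 : 2 * (n / 2) = n := by omega
        have hm : N ≤ n / 2 := by omega
        simp only [tr, if_pos hpar]
        refine Finset.mem_image.mpr ⟨pairFn h f (n / 2), hN _ hm, ?_⟩
        unfold pairFn
        rw [e1, Nat.add_mul_mod_self_left, Nat.mod_eq_of_lt (hf n)]
      · have e1 : 2 * (n / 2) + 1 = n := by omega
        have e2 : n - 1 = 2 * (n / 2) := by omega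
        have hm : N ≤ n / 2 := by omega
        simp only [tr, if_neg hpar]
        refine Finset.mem_image.mpr ⟨pairFn h f (n / 2), hN _ hm, ?_⟩
        unfold pairFn
        rw [e2, Nat.add_mul_div_left _ _ (hpos (2 * (n / 2))),
          Nat.div_eq_of_lt (hf (2 * (n / 2))), Nat.zero_add, e1]
  calc lcal' h ≤ Cardinal.mk ((tr h) '' Φ) := hΨ
    _ ≤ Cardinal.mk Φ := Cardinal.mk_image_le
    _ = lcal hs := hmk

theorem stmt2 :
    (∀ h : ℕ → ℕ, ∃ hs : ℕ → ℕ, lcal' h ≤ lcal hs) ∧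
    (⨆ h : ℕ → ℕ, lcal' h) = ⨆ h : ℕ → ℕ, lcal h := by
  refine ⟨main_step, le_antisymm ?_ ?_⟩
  · refine ciSup_le fun h => ?_
    obtain ⟨hs, hle⟩ := main_step h
    exact hle.trans (le_ciSup (Cardinal.bddAbove_range _) hs)
  · exact ciSup_le fun h => (lcal_le_lcal' h).trans (le_ciSup (Cardinal.bddAbove_range _) h)
end

section
/- Suppose every family F ⊆ ω^ω of size κ is bounded with respect to ≤* and every family of κ functions in ω^ω is localized by a single slalom in S (i.e., add(N)-style localization holds at κ, via Bartoszyński's characterization). Then for every family Φ ⊆ S^+ with |Φ| ≤ κ there exists ψ ∈ S^+ such that φ(n) ⊆ ψ(n) for all but finitely many n, for every φ ∈ Φ. (Formal version: if κ < add(N), then S^+ is <add(N)-directed under ⊑, where ⊑ is eventual coordinatewise inclusion.) -/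
open Filter

theorem stmt5 (κ : Cardinal)
    (hb : ∀ F : Set (ℕ → ℕ), Cardinal.mk F ≤ κ →
      ∃ g : ℕ → ℕ, ∀ f ∈ F, ∀ᶠ n in atTop, f n ≤ g n)
    (hl : ∀ F : Set (ℕ → ℕ), Cardinal.mk F ≤ κ →
      ∃ φ : Slalom, (∀ n, (φ n).card ≤ 2 ^ n) ∧ ∀ f ∈ F, fSq f φ) :
    ∀ Φ : Set Slalom, (∀ φ ∈ Φ, SPlus φ) → Cardinal.mk Φ ≤ κ →
      ∃ ψ : Slalom, SPlus ψ ∧ ∀ φ ∈ Φ, SqS φ ψ := by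
  classical
  intro Φ hΦ hcard
  -- Step 1: decay-rate functions
  have hex : ∀ φ ∈ Φ, ∀ j : ℕ, ∃ N, ∀ n ≥ N, (φ n).card * 2 ^ j ≤ 2 ^ n := by
    intro φ hφ j
    have h3 : ∀ᶠ n in atTop, ((φ n).card : ℝ) / 2 ^ n < ((2 : ℝ) ^ j)⁻¹ :=
      (hΦ φ hφ).2.eventually_lt_const (by positivity)
    obtain ⟨N, hN⟩ := eventually_atTop.1 h3
    refine ⟨N, fun n hn => ?_⟩
    have h4 := hN n hn
    rw [div_lt_iff₀ (by positivity)] at h4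
    have h5 : ((φ n).card : ℝ) * 2 ^ j ≤ 2 ^ n := by
      have h2j : (0:ℝ) < 2 ^ j := by positivity
      rw [inv_mul_eq_div] at h4
      calc ((φ n).card : ℝ) * 2 ^ j ≤ (2 ^ n / 2 ^ j) * 2 ^ j :=
            mul_le_mul_of_nonneg_right h4.le h2j.le
        _ = 2 ^ n := div_mul_cancel₀ _ (ne_of_gt h2j)
    exact_mod_cast h5
  let gφ : Slalom → ℕ → ℕ := fun φ j =>
    if h : ∃ N, ∀ n ≥ N, (φ n).card * 2 ^ j ≤ 2 ^ n then h.choose else 0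
  have hgφ : ∀ φ ∈ Φ, ∀ j, ∀ n ≥ gφ φ j, (φ n).card * 2 ^ j ≤ 2 ^ n := by
    intro φ hφ j
    have h := hex φ hφ j
    simpa only [gφ, dif_pos h] using h.choose_spec
  -- Step 2: bound the decay rates
  obtain ⟨g, hg⟩ := hb ((fun φ => gφ φ) '' Φ) (le_trans Cardinal.mk_image_le hcard)
  have hg' : ∀ φ ∈ Φ, ∀ᶠ j in atTop, gφ φ j ≤ g j :=
    fun φ hφ => hg _ (Set.mem_image_of_mem _ hφ)
  let G : ℕ → ℕ := fun j => j + (Finset.range (j + 1)).sup g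
  have hGj : ∀ j, j ≤ G j := fun j => Nat.le_add_right _ _
  have hgG : ∀ j, g j ≤ G j := fun j =>
    le_trans (Finset.le_sup (Finset.self_mem_range_succ j)) (Nat.le_add_left _ _)
  let d : ℕ → ℕ := fun n => ((Finset.range (n + 1)).filter (fun j => G j ≤ n)).sup id
  have hdn : ∀ n, d n ≤ n := by
    intro n
    refine Finset.sup_le fun j hj => ?_
    simp only [Finset.mem_filter, Finset.mem_range] at hj
    simp only [id_eq]
    omega
  have hdtop : Tendsto d atTop atTop := by
    rw [tendsto_atTop]
    intro J
    filter_upwards [eventually_ge_atTop (G J)] with n hn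
    have hmem : J ∈ (Finset.range (n + 1)).filter (fun j => G j ≤ n) := by
      simp only [Finset.mem_filter, Finset.mem_range]
      exact ⟨by have := hGj J; omega, hn⟩
    exact Finset.le_sup (f := id) hmem
  have hGd : ∀ n, 1 ≤ d n → G (d n) ≤ n := by
    intro n h1
    have hne : (((Finset.range (n + 1)).filter (fun j => G j ≤ n))).Nonempty := by
      by_contra h
      rw [Finset.not_nonempty_iff_eq_empty] at h
      simp only [d, h, Finset.sup_empty] at h1
      exact absurd h1 (by simp)
    obtain ⟨b, hbmem, hbsup⟩ := Finset.exists_mem_eq_sup _ hne id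
    simp only [Finset.mem_filter] at hbmem
    have : d n = b := hbsup
    rw [this]
    exact hbmem.2
  -- key eventual bound
  have hkey : ∀ φ ∈ Φ, ∀ᶠ n in atTop, (φ n).card ≤ 2 ^ (n - d n) := by
    intro φ hφ
    obtain ⟨j0, hj0⟩ := eventually_atTop.1 (hg' φ hφ)
    filter_upwards [hdtop.eventually (eventually_ge_atTop (j0 + 1))] with n hn
    have h1 : G (d n) ≤ n := hGd n (by omega)
    have h2 : gφ φ (d n) ≤ n := le_trans (le_trans (hj0 _ (by omega)) (hgG _)) h1
    have h3 := hgφ φ hφ (d n) n h2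
    have h4 : d n ≤ n := hdn n
    have h5 : 2 ^ n = 2 ^ (n - d n) * 2 ^ (d n) := by
      rw [← pow_add]; congr 1; omega
    rw [h5] at h3
    exact Nat.le_of_mul_le_mul_right h3 (Nat.pow_pos (by norm_num))
  -- Step 3: blocks and coding
  let blk : ℕ → Finset ℕ := fun k =>
    (Finset.range (G (2 * k + 2))).filter (fun n => d n / 2 = k)
  have hblk : ∀ n, n ∈ blk (d n / 2) := by
    intro n
    simp only [blk, Finset.mem_filter, Finset.mem_range, eq_self_iff_true, and_true]
    by_contra h
    push_neg at h
    have h2 : 2 * (d n / 2) + 2 ≤ d n := by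
      have hmem : 2 * (d n / 2) + 2 ∈ (Finset.range (n + 1)).filter (fun j => G j ≤ n) := by
        simp only [Finset.mem_filter, Finset.mem_range]
        have := hGj (2 * (d n / 2) + 2)
        exact ⟨by omega, h⟩
      exact Finset.le_sup (f := id) hmem
    omega
  let s : Slalom → ℕ → Finset (ℕ × ℕ) := fun φ k =>
    (blk k).biUnion (fun n => (φ n).image (fun m => (n, m)))
  obtain ⟨χ, hχcard, hχ⟩ := hl ((fun φ => fun k => Encodable.encode (s φ k)) '' Φ)
    (le_trans Cardinal.mk_image_le hcard)
  have hχ' : ∀ φ ∈ Φ, ∀ᶠ k in atTop, Encodable.encode (s φ k) ∈ χ k :=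
    fun φ hφ => hχ _ (Set.mem_image_of_mem _ hφ)
  let T : ℕ → Finset (ℕ × ℕ) := fun c => ((Encodable.decode c : Option (Finset (ℕ × ℕ)))).getD ∅
  let D : ℕ → ℕ → Finset ℕ := fun c n => ((T c).filter (fun p => p.1 = n)).image Prod.snd
  let ψ : Slalom := fun n =>
    (χ (d n / 2)).biUnion (fun c => if (D c n).card ≤ 2 ^ (n - d n) then D c n else ∅)
  -- cardinality bound
  have hψcard : ∀ n, (ψ n).card ≤ 2 ^ (d n / 2) * 2 ^ (n - d n) := by
    intro n
    refine le_trans Finset.card_biUnion_le ?_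
    refine le_trans (Finset.sum_le_card_nsmul _ _ (2 ^ (n - d n)) ?_) ?_
    · intro c _
      split
      · assumption
      · simp
    · simp only [smul_eq_mul]
      exact Nat.mul_le_mul_right _ (hχcard _)
  have hψcard2 : ∀ n, (ψ n).card ≤ 2 ^ (n - d n / 2) := by
    intro n
    refine le_trans (hψcard n) ?_
    rw [← pow_add]
    refine Nat.pow_le_pow_right (by norm_num) ?_
    have := hdn n
    omega
  have hψbound : ∀ n, (ψ n).card ≤ 2 ^ n := fun n =>
    le_trans (hψcard2 n) (Nat.pow_le_pow_right (by norm_num) (by omega))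
  -- tendsto zero
  have hktop : Tendsto (fun n => d n / 2) atTop atTop := by
    rw [tendsto_atTop]
    intro J
    filter_upwards [hdtop.eventually (eventually_ge_atTop (2 * J))] with n hn
    omega
  have hψtend : Tendsto (fun n => ((ψ n).card : ℝ) / 2 ^ n) atTop (nhds 0) := by
    refine squeeze_zero (fun n => by positivity) (fun n => ?_)
      ((tendsto_pow_atTop_nhds_zero_of_lt_one (by norm_num) (by norm_num : (1:ℝ)/2 < 1)).comp hktop)
    show ((ψ n).card : ℝ) / 2 ^ n ≤ (1 / 2 : ℝ) ^ (d n / 2)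
    rw [div_le_iff₀ (by positivity)]
    have h1 : ((ψ n).card : ℝ) ≤ 2 ^ (n - d n / 2) := by
      exact_mod_cast (hψcard2 n)
    refine le_trans h1 ?_
    have hkn : d n / 2 ≤ n := le_trans (Nat.div_le_self _ _) (hdn n)
    rw [div_pow, one_pow, div_mul_eq_mul_div, one_mul, le_div_iff₀ (by positivity),
      ← pow_add]
    exact pow_le_pow_right₀ (by norm_num) (by omega)
  -- correctness
  refine ⟨ψ, ⟨hψbound, hψtend⟩, ?_⟩
  intro φ hφ
  have hDφ : ∀ n, D (Encodable.encode (s φ (d n / 2))) n = φ n := by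
    intro n
    have hT : T (Encodable.encode (s φ (d n / 2))) = s φ (d n / 2) := by
      simp [T, Encodable.encodek]
    simp only [D, hT]
    ext m
    simp only [Finset.mem_image, Finset.mem_filter, s, Finset.mem_biUnion, Prod.exists]
    constructor
    · rintro ⟨a, b, ⟨⟨n', hn', hmem⟩, ha⟩, hb⟩
      obtain ⟨m', hm', heq⟩ := hmem
      simp only [Prod.mk.injEq] at heq
      obtain ⟨h1, h2⟩ := heq
      subst h1 h2 ha hb
      exact hm'
    · intro hm
      exact ⟨n, m, ⟨⟨n, hblk n, m, hm, rfl⟩, rfl⟩, rfl⟩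
  show ∀ᶠ n in atTop, φ n ⊆ ψ n
  obtain ⟨K, hK⟩ := eventually_atTop.1 (hχ' φ hφ)
  filter_upwards [hkey φ hφ, hktop.eventually (eventually_ge_atTop K)] with n h1 h2
  have hc := hK _ h2
  have hDn := hDφ n
  refine fun m hm => Finset.mem_biUnion.2 ⟨_, hc, ?_⟩
  rw [if_pos (by rw [hDn]; exact h1), hDn]
  exact hm
end
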